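/- Let k ≥ 1 and z a complex number in the common domain. Then the bilateral Lucas Eisenstein series satisfies 𝓛_{2k}(1-z) = 𝓛_{2k}(z). -/

import Mathlib

/-- For `k ≥ 1` and `z` with both `z` and `1 - z` avoiding all ratios `L_n/L_{n-1}`, `φ` and
`-1/φ`, the bilateral Lucas Eisenstein series satisfies `𝓛_{2k}(1-z) = 𝓛_{2k}(z)`. -/
theorem lucas_eisenstein_reflection (L : ℤ → ℤ) (h0 : L 0 = 2) (h1 : L 1 = 1)
    (hrec : ∀ n : ℤ, L n = L (n - 1) + L (n - 2))
    (k : ℕ) (hk : 1 ≤ k) (z : ℂ)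
    (hpole : ∀ n : ℤ, z ≠ (L n : ℂ) / (L (n - 1) : ℂ))
    (hphi : z ≠ (((1 + Real.sqrt 5) / 2 : ℝ) : ℂ))
    (hphi' : z ≠ -1 / (((1 + Real.sqrt 5) / 2 : ℝ) : ℂ))
    (hpole' : ∀ n : ℤ, 1 - z ≠ (L n : ℂ) / (L (n - 1) : ℂ))
    (hphi2 : 1 - z ≠ (((1 + Real.sqrt 5) / 2 : ℝ) : ℂ))
    (hphi2' : 1 - z ≠ -1 / (((1 + Real.sqrt 5) / 2 : ℝ) : ℂ)) :
    ∑' j : ℤ, (((L j : ℂ) * (1 - z) + (L (j - 1) : ℂ)) ^ (2 * k))⁻¹ =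
      ∑' j : ℤ, (((L j : ℂ) * z + (L (j - 1) : ℂ)) ^ (2 * k))⁻¹ := by
  -- forward recurrence
  have hrec' : ∀ n : ℤ, L (n + 1) = L n + L (n - 1) := by
    intro n
    have := hrec (n + 1)
    rw [show n + 1 - 1 = n by ring, show n + 1 - 2 = n - 1 by ring] at this
    exact this
  -- sign function
  set e : ℤ → ℤ := fun j => (((-1 : ℤˣ) ^ j : ℤˣ) : ℤ) with he_def
  have he : ∀ j, e (j + 1) = - e j := by
    intro j
    simp [he_def, zpow_add_one]
  have he' : ∀ j, e (j - 1) = - e j := by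
    intro j
    have := he (j - 1)
    rw [show j - 1 + 1 = j by ring] at this
    linarith
  have hesq : ∀ j, e j * e j = 1 := by
    intro j
    simp [he_def, ← Units.val_mul, ← mul_zpow]
  -- step down
  have hstep_down : ∀ j : ℤ, L (-j) = e j * L j → L (-(j + 1)) = e (j + 1) * L (j + 1) →
      L (-(j - 1)) = e (j - 1) * L (j - 1) := by
    intro j hj hj1
    have a1 : L (-(j - 1)) = L (-j) + L (-(j + 1)) := by
      have := hrec' (-j)
      rw [show -(j - 1) = -j + 1 by ring, show -(j + 1) = -j - 1 by ring]
      exact this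
    have a2 : L (j - 1) = L (j + 1) - L j := by
      have := hrec' j
      omega
    rw [a1, hj, hj1, a2, he j, he' j]
    ring
  -- step up
  have hstep_up : ∀ j : ℤ, L (-j) = e j * L j → L (-(j + 1)) = e (j + 1) * L (j + 1) →
      L (-(j + 2)) = e (j + 2) * L (j + 2) := by
    intro j hj hj1
    have a1 : L (-(j + 2)) = L (-j) - L (-(j + 1)) := by
      have := hrec (-j)
      rw [show -(j + 2) = -j - 2 by ring, show -(j + 1) = -j - 1 by ring]
      omega
    have a2 : L (j + 2) = L (j + 1) + L j := by
      have := hrec' (j + 1)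
      rw [show j + 1 + 1 = j + 2 by ring, show j + 1 - 1 = j by ring] at this
      omega
    have e2 : e (j + 2) = e j := by
      have := he (j + 1); have := he j
      rw [show j + 2 = j + 1 + 1 by ring]
      omega
    rw [a1, hj, hj1, a2, he j, e2]
    ring
  -- L at negative indices
  have hneg : ∀ j : ℤ, L (-j) = e j * L j ∧ L (-(j + 1)) = e (j + 1) * L (j + 1) := by
    intro j
    induction j using Int.induction_on with
    | zero =>
      constructor
      · simp [he_def]
      · have hm1 : L (-1) = -1 := by
          have := hrec 1
          simp only [show (1 : ℤ) - 1 = 0 by ring, show (1 : ℤ) - 2 = -1 by ring] at this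
          omega
        have : e 1 = -1 := by simp [he_def]
        simp [hm1, this, h1]
    | succ n ih =>
      obtain ⟨ih1, ih2⟩ := ih
      refine ⟨ih2, ?_⟩
      have := hstep_up (n : ℤ) ih1 ih2
      rw [show ((n : ℤ) + 1 + 1) = (n : ℤ) + 2 by ring]
      exact this
    | pred n ih =>
      obtain ⟨ih1, ih2⟩ := ih
      constructor
      · exact hstep_down (-(n : ℤ)) ih1 ih2
      · rw [show (-(n : ℤ) - 1 + 1) = -(n : ℤ) by ring]
        exact ih1
  -- reindex the RHS by j ↦ -j
  have hre := (Equiv.neg ℤ).tsum_eq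
    (fun j : ℤ => (((L j : ℂ) * z + (L (j - 1) : ℂ)) ^ (2 * k))⁻¹)
  rw [← hre]
  refine tsum_congr fun j => ?_
  simp only [Equiv.neg_apply]
  congr 1
  -- pointwise identity of the bases raised to 2k
  have h1' : (L j : ℂ) * (1 - z) + (L (j - 1) : ℂ) = (L (j + 1) : ℂ) - (L j : ℂ) * z := by
    have := hrec' j
    push_cast [this]
    ring
  have hLm : L (-j) = e j * L j := (hneg j).1
  have hLm1 : L (-j - 1) = e (j + 1) * L (j + 1) := by
    rw [show -j - 1 = -(j + 1) by ring]
    exact (hneg j).2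
  have h2' : (L (-j) : ℂ) * z + (L (-j - 1) : ℂ)
      = (e j : ℂ) * ((L j : ℂ) * z - (L (j + 1) : ℂ)) := by
    rw [hLm, hLm1, he j]
    push_cast
    ring
  rw [h1', h2', mul_pow]
  have hepow : ((e j : ℂ)) ^ (2 * k) = 1 := by
    have : ((e j : ℂ)) ^ 2 = 1 := by
      rw [sq, ← Int.cast_mul, hesq j, Int.cast_one]
    calc ((e j : ℂ)) ^ (2 * k) = (((e j : ℂ)) ^ 2) ^ k := by rw [pow_mul]
    _ = 1 := by rw [this, one_pow]
  rw [hepow, one_mul]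
  have hev : Even (2 * k) := even_two_mul k
  rw [show (L j : ℂ) * z - (L (j + 1) : ℂ) = -((L (j + 1) : ℂ) - (L j : ℂ) * z) by ring,
    hev.neg_pow]
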